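/- Length bound for the interval I^{NAS0}. Let z be a real number with z² < 7. For every A > 0 and every index i with 1 ≤ i ≤ m, g_{1i}(A) + g_{2i}(A) + ((7−z²)/4)·g_{3i}(A) < D_i · (1 + (7−z²)/2); equivalently, the half-length z·√(g_{1i}(A)+g_{2i}(A)+((7−z²)/4)g_{3i}(A)) of I^{NAS0} is less than z·√(D_i(1+(7−z²)/2)). -/

import Mathlib

open Matrix Real

/-- The diagonal covariance matrix `V(A) = diag(A + D₁, …, A + D_m)`. -/
noncomputable def Vmat {m : ℕ} (D : Fin m → ℝ) (A : ℝ) : Matrix (Fin m) (Fin m) ℝ :=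
  Matrix.diagonal (fun i => A + D i)

/-- `g_{1i}(A) = A·D_i/(A+D_i)`. -/
noncomputable def g1 {m : ℕ} (D : Fin m → ℝ) (A : ℝ) (i : Fin m) : ℝ :=
  A * D i / (A + D i)

/-- `g_{2i}(A) = B_i²·x_iᵀ(XᵀV⁻¹X)⁻¹x_i` with `B_i = D_i/(A+D_i)`. -/
noncomputable def g2 {m p : ℕ} (X : Matrix (Fin m) (Fin p) ℝ) (D : Fin m → ℝ)
    (A : ℝ) (i : Fin m) : ℝ :=
  (D i / (A + D i)) ^ 2 * (X i ⬝ᵥ ((Xᵀ * (Vmat D A)⁻¹ * X)⁻¹ *ᵥ X i))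

/-- `g_{3i}(A) = 2B_i²/((A+D_i)·tr(V⁻²))` with `B_i = D_i/(A+D_i)`. -/
noncomputable def g3 {m : ℕ} (D : Fin m → ℝ) (A : ℝ) (i : Fin m) : ℝ :=
  2 * (D i / (A + D i)) ^ 2 / ((A + D i) * (((Vmat D A)⁻¹) ^ 2).trace)

lemma quadform {m p : ℕ} (X : Matrix (Fin m) (Fin p) ℝ) (w : Fin m → ℝ) (v : Fin p → ℝ) :
    v ⬝ᵥ ((Xᵀ * Matrix.diagonal w * X) *ᵥ v) = ∑ j, w j * (X *ᵥ v) j ^ 2 := by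
  rw [← Matrix.mulVec_mulVec, ← Matrix.mulVec_mulVec]
  rw [Matrix.dotProduct_mulVec, Matrix.vecMul_transpose]
  simp only [Matrix.mulVec_diagonal, dotProduct, sq]
  exact Finset.sum_congr rfl fun j _ => by ring

lemma inj_of_rank {m p : ℕ} (X : Matrix (Fin m) (Fin p) ℝ) (hrank : X.rank = p) :
    Function.Injective X.mulVecLin := by
  rw [← LinearMap.ker_eq_bot]
  have h := LinearMap.finrank_range_add_finrank_ker X.mulVecLin
  rw [show Module.finrank ℝ (LinearMap.range X.mulVecLin) = p from hrank] at h
  simp [Module.finrank_pi] at h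
  exact h


lemma Vinv {m : ℕ} (D : Fin m → ℝ) (A : ℝ) (h : ∀ j, A + D j ≠ 0) :
    (Vmat D A)⁻¹ = Matrix.diagonal (fun j => (A + D j)⁻¹) := by
  apply Matrix.inv_eq_right_inv
  rw [Vmat, Matrix.diagonal_mul_diagonal]
  have : (fun j => (A + D j) * (A + D j)⁻¹) = fun _ => (1:ℝ) :=
    funext fun j => mul_inv_cancel₀ (h j)
  rw [this, Matrix.diagonal_one]


lemma Vtrace {m : ℕ} (D : Fin m → ℝ) (A : ℝ) (h : ∀ j, A + D j ≠ 0) :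
    (((Vmat D A)⁻¹) ^ 2).trace = ∑ j, ((A + D j)⁻¹) ^ 2 := by
  rw [Vinv D A h, Matrix.diagonal_pow, Matrix.trace_diagonal]
  simp [Pi.pow_apply]

lemma Mpos {m p : ℕ} (X : Matrix (Fin m) (Fin p) ℝ) (hrank : X.rank = p)
    (D : Fin m → ℝ) (A : ℝ) (hpos : ∀ j, 0 < A + D j) :
    (Xᵀ * (Vmat D A)⁻¹ * X).PosDef := by
  rw [Vinv D A (fun j => (hpos j).ne')]
  rw [Matrix.posDef_iff_dotProduct_mulVec]
  constructor
  · unfold Matrix.IsHermitian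
    simp only [Matrix.conjTranspose_eq_transpose_of_trivial, Matrix.transpose_mul,
      Matrix.transpose_transpose, Matrix.diagonal_transpose, Matrix.mul_assoc]
  · intro v hv
    rw [show star v = v from rfl, quadform]
    have hu : X *ᵥ v ≠ 0 := by
      intro h
      exact hv (inj_of_rank X hrank (by simpa using h))
    obtain ⟨j, hj⟩ : ∃ j, (X *ᵥ v) j ≠ 0 := by
      by_contra h
      push_neg at h
      exact hu (funext h)
    apply Finset.sum_pos' (fun k _ => mul_nonneg (inv_nonneg.mpr (hpos k).le) (sq_nonneg _))
    exact ⟨j, Finset.mem_univ j, mul_pos (inv_pos.mpr (hpos j)) (by positivity)⟩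

/-- leverage bound: `x_i ⬝ M⁻¹ x_i ≤ A + D i` -/
lemma leverage {m p : ℕ} (X : Matrix (Fin m) (Fin p) ℝ) (hrank : X.rank = p)
    (D : Fin m → ℝ) (A : ℝ) (hpos : ∀ j, 0 < A + D j) (i : Fin m) :
    0 ≤ X i ⬝ᵥ ((Xᵀ * (Vmat D A)⁻¹ * X)⁻¹ *ᵥ X i) ∧
    X i ⬝ᵥ ((Xᵀ * (Vmat D A)⁻¹ * X)⁻¹ *ᵥ X i) ≤ A + D i := by
  set M := Xᵀ * (Vmat D A)⁻¹ * X with hM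
  have hMpd := Mpos X hrank D A hpos
  have hunit : IsUnit M.det := (Matrix.isUnit_iff_isUnit_det M).mp hMpd.isUnit
  set v := M⁻¹ *ᵥ X i with hv
  set t := X i ⬝ᵥ v with ht
  -- v ⬝ᵥ (M *ᵥ v) = v ⬝ᵥ X i = t
  have hMv : M *ᵥ v = X i := by
    rw [hv, Matrix.mulVec_mulVec, Matrix.mul_nonsing_inv _ hunit, Matrix.one_mulVec]
  have hq : v ⬝ᵥ (M *ᵥ v) = ∑ j, (A + D j)⁻¹ * (X *ᵥ v) j ^ 2 := by
    rw [hM, Vinv D A (fun j => (hpos j).ne'), quadform]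
  have hqt : v ⬝ᵥ (M *ᵥ v) = t := by
    rw [hMv, ht, dotProduct_comm]
  -- u_i = X i ⬝ᵥ v = t
  have hui : (X *ᵥ v) i = t := rfl
  have hsum_nonneg : ∀ j ∈ Finset.univ, (0:ℝ) ≤ (A + D j)⁻¹ * (X *ᵥ v) j ^ 2 :=
    fun j _ => mul_nonneg (inv_nonneg.mpr (hpos j).le) (sq_nonneg _)
  have ht0 : 0 ≤ t := by
    rw [← hqt, hq]; exact Finset.sum_nonneg hsum_nonneg
  refine ⟨ht0, ?_⟩
  have hkey : (A + D i)⁻¹ * t ^ 2 ≤ t := by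
    calc (A + D i)⁻¹ * t ^ 2 = (A + D i)⁻¹ * (X *ᵥ v) i ^ 2 := by rw [hui]
    _ ≤ ∑ j, (A + D j)⁻¹ * (X *ᵥ v) j ^ 2 :=
        Finset.single_le_sum hsum_nonneg (Finset.mem_univ i)
    _ = t := by rw [← hq, hqt]
  rcases eq_or_lt_of_le ht0 with h | h
  · rw [← h]; exact (hpos i).le
  · have h2 : t ^ 2 ≤ (A + D i) * t := by
      rwa [inv_mul_le_iff₀ (hpos i)] at hkey
    nlinarith [h2, h]

/-- Length bound for `I^{NAS0}`: if `z² < 7`, then for every `A > 0` and every `i`,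
`g_{1i}(A) + g_{2i}(A) + ((7−z²)/4)·g_{3i}(A) < D_i·(1 + (7−z²)/2)`; equivalently
(for `z > 0`) the half-length of `I^{NAS0}` is less than `z·√(D_i(1+(7−z²)/2))`. -/
theorem nas0_length_bound {m p : ℕ} (hm : 0 < m) (hp : 0 < p)
    (X : Matrix (Fin m) (Fin p) ℝ) (hrank : X.rank = p)
    (D : Fin m → ℝ) (hD : ∀ j, 0 < D j)
    (z : ℝ) (hz : z ^ 2 < 7)
    (A : ℝ) (hA : 0 < A) (i : Fin m) :
    g1 D A i + g2 X D A i + ((7 - z ^ 2) / 4) * g3 D A i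
      < D i * (1 + (7 - z ^ 2) / 2) ∧
    (0 < z →
      z * Real.sqrt (g1 D A i + g2 X D A i + ((7 - z ^ 2) / 4) * g3 D A i)
        < z * Real.sqrt (D i * (1 + (7 - z ^ 2) / 2))) := by
  have hpos : ∀ j, 0 < A + D j := fun j => add_pos hA (hD j)
  have hc : 0 < A + D i := hpos i
  have hd : 0 < D i := hD i
  have hcoef : 0 < (7 - z ^ 2) / 4 := by linarith
  obtain ⟨ht0, ht1⟩ := leverage X hrank D A hpos i
  -- g1 + g2 ≤ D i
  have hg1nn : 0 ≤ g1 D A i := by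
    unfold g1; positivity
  have hg2nn : 0 ≤ g2 X D A i := mul_nonneg (by positivity) ht0
  have h12 : g1 D A i + g2 X D A i ≤ D i := by
    have hle : g2 X D A i ≤ (D i / (A + D i)) ^ 2 * (A + D i) :=
      mul_le_mul_of_nonneg_left ht1 (by positivity)
    have heq : A * D i / (A + D i) + (D i / (A + D i)) ^ 2 * (A + D i) = D i := by
      field_simp
    unfold g1
    linarith
  -- trace bounds
  have htr : (((Vmat D A)⁻¹) ^ 2).trace = ∑ j, ((A + D j)⁻¹) ^ 2 :=
    Vtrace D A (fun j => (hpos j).ne')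
  have htrge : ((A + D i)⁻¹) ^ 2 ≤ (((Vmat D A)⁻¹) ^ 2).trace := by
    rw [htr]
    exact Finset.single_le_sum (f := fun j => ((A + D j)⁻¹) ^ 2)
      (fun j _ => sq_nonneg _) (Finset.mem_univ i)
  have htrpos : 0 < (((Vmat D A)⁻¹) ^ 2).trace :=
    lt_of_lt_of_le (by positivity) htrge
  have hqge : (A + D i)⁻¹ ≤ (A + D i) * (((Vmat D A)⁻¹) ^ 2).trace := by
    have h1 : (A + D i) * ((A + D i)⁻¹) ^ 2 = (A + D i)⁻¹ := by
      field_simp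
    calc (A + D i)⁻¹ = (A + D i) * ((A + D i)⁻¹) ^ 2 := h1.symm
      _ ≤ (A + D i) * (((Vmat D A)⁻¹) ^ 2).trace :=
          mul_le_mul_of_nonneg_left htrge hc.le
  have hg3nn : 0 ≤ g3 D A i := by
    unfold g3
    exact div_nonneg (by positivity) (mul_nonneg hc.le htrpos.le)
  have hg3lt : g3 D A i < 2 * D i := by
    have h1 : g3 D A i ≤ 2 * (D i / (A + D i)) ^ 2 / (A + D i)⁻¹ := by
      unfold g3
      exact div_le_div_of_nonneg_left (by positivity) (by positivity) hqge
    have h2 : 2 * (D i / (A + D i)) ^ 2 / (A + D i)⁻¹ = 2 * D i ^ 2 / (A + D i) := by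
      field_simp
    have h3 : 2 * D i ^ 2 / (A + D i) < 2 * D i := by
      rw [div_lt_iff₀ hc]
      nlinarith
    linarith [h1, h2 ▸ h1]
  have hmain : g1 D A i + g2 X D A i + ((7 - z ^ 2) / 4) * g3 D A i
      < D i * (1 + (7 - z ^ 2) / 2) := by
    have hlt : ((7 - z ^ 2) / 4) * g3 D A i < ((7 - z ^ 2) / 4) * (2 * D i) :=
      mul_lt_mul_of_pos_left hg3lt hcoef
    have heq : D i * (1 + (7 - z ^ 2) / 2) = D i + ((7 - z ^ 2) / 4) * (2 * D i) := by
      ring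
    linarith
  refine ⟨hmain, fun hz0 => ?_⟩
  apply mul_lt_mul_of_pos_left _ hz0
  apply Real.sqrt_lt_sqrt _ hmain
  have : 0 ≤ ((7 - z ^ 2) / 4) * g3 D A i := mul_nonneg hcoef.le hg3nn
  linarith
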